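/- arXiv:1101.2742 — 5 statements merged into one kernel-verified Lean document; each statement's English description precedes it below -/
import Mathlib

section
/- Let k be a field, V = k³, and let (x_i, f_i) for i = 1,2,3,4 be a generic configuration of flags: f_i(x_i) = 0, the points [x_i] are in general position (any three of x_i are linearly independent), and f_j(x_i) ≠ 0 for i ≠ j. For an even permutation (i,j,k,l) of (1,2,3,4), the cross-ratio z_ij of the four lines through x_i given by ker(f_i) and the lines (x_i x_j), (x_i x_k), (x_i x_l) (in the pencil of lines through x_i) equals f_i(x_k)·det(x_i,x_j,x_l) / (f_i(x_l)·det(x_i,x_j,x_k)). -/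
/-- The determinant of three vectors of `K³` w.r.t. the canonical basis. -/
def det3 {K : Type*} [Field K] (a b c : Fin 3 → K) : K :=
  Matrix.det (Matrix.of ![a, b, c])

/-- A generic configuration of (affine) flags `(xᵢ, fᵢ)`: each `fᵢ` vanishes on `xᵢ`,
the points are in general position (any three of the `xᵢ` are linearly independent),
and `f j (x i) ≠ 0` for `i ≠ j`. -/
structure IsGenericConfig {K : Type*} [Field K] {ι : Type*}
    (x : ι → Fin 3 → K) (f : ι → Module.Dual K (Fin 3 → K)) : Prop where
  flag : ∀ i, f i (x i) = 0
  pos : ∀ i j l, i ≠ j → i ≠ l → j ≠ l → det3 (x i) (x j) (x l) ≠ 0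
  nondeg : ∀ i j, i ≠ j → f j (x i) ≠ 0

/-- The edge coordinate `z_ij = f_i(x_k)·det(x_i,x_j,x_l) / (f_i(x_l)·det(x_i,x_j,x_k))`
of a tetrahedron of flags, for `(i,j,k,l)` an even permutation of the four vertices. -/
def zEdge {K : Type*} [Field K] (x : Fin 4 → Fin 3 → K)
    (f : Fin 4 → Module.Dual K (Fin 3 → K)) (i j k l : Fin 4) : K :=
  f i (x k) * det3 (x i) (x j) (x l) / (f i (x l) * det3 (x i) (x j) (x k))

/-- The triple ratio `z_ijk = f_i(x_j)f_j(x_k)f_k(x_i)/(f_i(x_k)f_j(x_i)f_k(x_j))`. -/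
def zFace {K : Type*} [Field K] {ι : Type*} (x : ι → Fin 3 → K)
    (f : ι → Module.Dual K (Fin 3 → K)) (i j k : ι) : K :=
  f i (x j) * f j (x k) * f k (x i) / (f i (x k) * f j (x i) * f k (x j))

/-- The cross-ratio in the pencil of lines through `x_i` of the four lines
`ker f_i`, `(x_i x_j)`, `(x_i x_k)`, `(x_i x_l)` equals
`f_i(x_k)·det(x_i,x_j,x_l) / (f_i(x_l)·det(x_i,x_j,x_k))`.  The pencil of lines through
`x_i` is coordinatized by the 2-dimensional space of linear forms vanishing at `x_i`
(the line `(x_i x_m)` corresponding to the form `det(x_i, x_m, ·)`), and the cross-ratio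
of four points of this projective line is computed in the coordinates given by
evaluation at `x_k` and `x_l`. -/
theorem crossRatio_pencil_eq {K : Type*} [Field K]
    (x : Fin 4 → Fin 3 → K) (f : Fin 4 → Module.Dual K (Fin 3 → K))
    (hgen : IsGenericConfig x f)
    (σ : Equiv.Perm (Fin 4)) (hσ : Equiv.Perm.sign σ = 1) :
    let i := σ 0; let j := σ 1; let k := σ 2; let l := σ 3
    -- linear forms cutting out the lines (x_i x_j), (x_i x_k), (x_i x_l)
    let gj : (Fin 3 → K) → K := fun v => det3 (x i) (x j) v
    let gk : (Fin 3 → K) → K := fun v => det3 (x i) (x k) v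
    let gl : (Fin 3 → K) → K := fun v => det3 (x i) (x l) v
    -- determinant of two forms in the coordinates (evaluation at x_k, evaluation at x_l)
    let d2 : ((Fin 3 → K) → K) → ((Fin 3 → K) → K) → K :=
      fun g h => g (x k) * h (x l) - g (x l) * h (x k)
    -- cross-ratio [ker f_i, (x_i x_j); (x_i x_k), (x_i x_l)]
    (d2 (⇑(f i)) gk * d2 gj gl) / (d2 (⇑(f i)) gl * d2 gj gk)
      = f i (x k) * det3 (x i) (x j) (x l) / (f i (x l) * det3 (x i) (x j) (x k)) := by
  intro i j k l gj gk gl d2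
  have hik : i ≠ k := σ.injective.ne (by decide)
  have hil : i ≠ l := σ.injective.ne (by decide)
  have hkl : k ≠ l := σ.injective.ne (by decide)
  have hA : det3 (x i) (x k) (x l) ≠ 0 := hgen.pos i k l hik hil hkl
  have hself : ∀ a b : Fin 3 → K, det3 a b b = 0 := by
    intro a b
    simp [det3, Matrix.det_fin_three, Matrix.vecHead, Matrix.vecTail]
    ring
  have hswap : ∀ a b c : Fin 3 → K, det3 a c b = -det3 a b c := by
    intro a b c
    simp [det3, Matrix.det_fin_three, Matrix.vecHead, Matrix.vecTail]
    ring
  set A := det3 (x i) (x k) (x l) with hAdef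
  have h1 : d2 (⇑(f i)) gk = f i (x k) * A := by
    simp only [d2, gk]; rw [hself (x i) (x k)]; ring
  have h2 : d2 gj gl = det3 (x i) (x j) (x l) * A := by
    simp only [d2, gj, gl]; rw [hself (x i) (x l), hswap (x i) (x k) (x l)]; ring
  have h3 : d2 (⇑(f i)) gl = f i (x l) * A := by
    simp only [d2, gl]; rw [hself (x i) (x l), hswap (x i) (x k) (x l)]; ring
  have h4 : d2 gj gk = det3 (x i) (x j) (x k) * A := by
    simp only [d2, gj, gk]; rw [hself (x i) (x k)]; ring
  rw [h1, h2, h3, h4,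
    show f i (x k) * A * (det3 (x i) (x j) (x l) * A)
      = f i (x k) * det3 (x i) (x j) (x l) * (A * A) by ring,
    show f i (x l) * A * (det3 (x i) (x j) (x k) * A)
      = f i (x l) * det3 (x i) (x j) (x k) * (A * A) by ring,
    mul_div_mul_right _ _ (mul_ne_zero hA hA)]
end

section
/- For a tetrahedron of flags with edge coordinates z_ij (defined via z_ij = f_i(x_k)det(x_i,x_j,x_l)/(f_i(x_l)det(x_i,x_j,x_k)) for (i,j,k,l) an even permutation of (1,2,3,4)) and face triple ratios z_ijk = f_i(x_j)f_j(x_k)f_k(x_i)/(f_i(x_k)f_j(x_i)f_k(x_j)), the relation z_ijk = −z_il · z_jl · z_kl holds for every even permutation (i,j,k,l) of (1,2,3,4). -/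
lemma det3_swap13 {K : Type*} [Field K] (a b c : Fin 3 → K) :
    det3 a b c = - det3 c b a := by
  simp [det3, Matrix.det_fin_three]; ring

/-- For a generic tetrahedron of flags and every even permutation `(i,j,k,l)` of the
vertices, the face triple ratio satisfies `z_ijk = −z_il·z_jl·z_kl`. -/
theorem face_relation {K : Type*} [Field K]
    (x : Fin 4 → Fin 3 → K) (f : Fin 4 → Module.Dual K (Fin 3 → K))
    (hgen : IsGenericConfig x f)
    (σ : Equiv.Perm (Fin 4)) (hσ : Equiv.Perm.sign σ = 1) :
    let i := σ 0; let j := σ 1; let k := σ 2; let l := σ 3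
    zFace x f i j k = -(zEdge x f i l j k * zEdge x f j l k i * zEdge x f k l i j) := by
  intro i j k l
  have ne : ∀ a b : Fin 4, a ≠ b → σ a ≠ σ b := fun a b h hh => h (σ.injective hh)
  have hij : i ≠ j := ne 0 1 (by decide)
  have hik : i ≠ k := ne 0 2 (by decide)
  have hil : i ≠ l := ne 0 3 (by decide)
  have hjk : j ≠ k := ne 1 2 (by decide)
  have hjl : j ≠ l := ne 1 3 (by decide)
  have hkl : k ≠ l := ne 2 3 (by decide)
  have d1 : det3 (x i) (x l) (x k) ≠ 0 := hgen.pos i l k hil hik hkl.symm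
  have d2 : det3 (x i) (x l) (x j) ≠ 0 := hgen.pos i l j hil hij hjl.symm
  have d3 : det3 (x j) (x l) (x i) ≠ 0 := hgen.pos j l i hjl hij.symm hil.symm
  have d4 : det3 (x j) (x l) (x k) ≠ 0 := hgen.pos j l k hjl hjk hkl.symm
  have d5 : det3 (x k) (x l) (x j) ≠ 0 := hgen.pos k l j hkl hjk.symm hjl.symm
  have d6 : det3 (x k) (x l) (x i) ≠ 0 := hgen.pos k l i hkl hik.symm hil.symm
  have fij : f i (x j) ≠ 0 := hgen.nondeg j i hij.symm
  have fik : f i (x k) ≠ 0 := hgen.nondeg k i hik.symm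
  have fji : f j (x i) ≠ 0 := hgen.nondeg i j hij
  have fjk : f j (x k) ≠ 0 := hgen.nondeg k j hjk.symm
  have fki : f k (x i) ≠ 0 := hgen.nondeg i k hik
  have fkj : f k (x j) ≠ 0 := hgen.nondeg j k hjk
  rw [zFace, zEdge, zEdge, zEdge, det3_swap13 (x i) (x l) (x k),
    det3_swap13 (x j) (x l) (x i), det3_swap13 (x k) (x l) (x j)]
  field_simp
end

section
/- In the pre-Bloch group P(k), the map δ: P(k) → k^× ∧_ℤ k^×, defined on generators by δ([z]) = z ∧ (1−z), is well defined: for all x, y ∈ k∖{0,1} with x ≠ y, the five-term element [x] − [y] + [y/x] − [(1−x⁻¹)/(1−y⁻¹)] + [(1−x)/(1−y)] is mapped to 0 in k^× ∧_ℤ k^×. -/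
open scoped Classical

/-- The wedge `a ∧ b` in the exterior square of a multiplicative abelian group `G`,
realized inside the exterior algebra of `G` (written additively) over `ℤ`. -/
noncomputable def wedgeU {G : Type*} [CommGroup G] (a b : G) :
    ExteriorAlgebra ℤ (Additive G) :=
  ExteriorAlgebra.ι ℤ (Additive.ofMul a) * ExteriorAlgebra.ι ℤ (Additive.ofMul b)

/-- The wedge `a ∧ b ∈ K^× ∧_ℤ K^×` of two field elements (junk value `1` at `0`). -/
noncomputable def wedgeK {K : Type*} [Field K] (a b : K) :
    ExteriorAlgebra ℤ (Additive Kˣ) :=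
  wedgeU (if h : a = 0 then 1 else Units.mk0 a h) (if h : b = 0 then 1 else Units.mk0 b h)

noncomputable def mA {K : Type*} [Field K] (a : K) : Additive Kˣ :=
  Additive.ofMul (if h : a = 0 then 1 else Units.mk0 a h)

lemma mA_mul {K : Type*} [Field K] {a b : K} (ha : a ≠ 0) (hb : b ≠ 0) :
    mA (a * b) = mA a + mA b := by
  unfold mA
  rw [dif_neg (mul_ne_zero ha hb), dif_neg ha, dif_neg hb]
  exact congrArg Additive.ofMul (Units.ext rfl)

lemma mA_div {K : Type*} [Field K] {a b : K} (ha : a ≠ 0) (hb : b ≠ 0) :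
    mA (a / b) = mA a - mA b := by
  have h : a / b * b = a := div_mul_cancel₀ a hb
  have := mA_mul (a := a / b) (b := b) (div_ne_zero ha hb) hb
  rw [h] at this
  rw [this]; abel

lemma wedgeK_eq {K : Type*} [Field K] {a b : K} :
    wedgeK a b = ExteriorAlgebra.ι ℤ (mA a) * ExteriorAlgebra.ι ℤ (mA b) := rfl

lemma key {R : Type*} [Ring R] (pa pb pc pd pe : R)
    (sa : pa * pa = 0) (sd : pd * pd = 0)
    (hac : pa * pc + pc * pa = 0) (had : pa * pd + pd * pa = 0) :
    pa * pc - pb * pd + (pb - pa) * (pe - pa)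
      - (pc + pb - (pd + pa)) * (pe - (pd + pa)) + (pc - pd) * (pe - pd) = 0 := by
  have h1 : pc * pa = -(pa * pc) := by rw [eq_neg_iff_add_eq_zero, add_comm]; exact hac
  have h2 : pd * pa = -(pa * pd) := by rw [eq_neg_iff_add_eq_zero, add_comm]; exact had
  simp only [mul_sub, sub_mul, add_mul, mul_add, sa, sd, h1, h2]
  abel

/-- The map `δ : P(K) → K^× ∧_ℤ K^×`, `[z] ↦ z ∧ (1−z)`, kills the five-term relations:
for `x ≠ y` in `K ∖ {0,1}` with all five arguments in `K ∖ {0,1}`,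
`δ([x] − [y] + [y/x] − [(1−x⁻¹)/(1−y⁻¹)] + [(1−x)/(1−y)]) = 0`. -/
theorem delta_five_term {K : Type*} [Field K] (x y : K)
    (hx0 : x ≠ 0) (hx1 : x ≠ 1) (hy0 : y ≠ 0) (hy1 : y ≠ 1) (hxy : x ≠ y)
    (h30 : y / x ≠ 0) (h31 : y / x ≠ 1)
    (h40 : (1 - x⁻¹) / (1 - y⁻¹) ≠ 0) (h41 : (1 - x⁻¹) / (1 - y⁻¹) ≠ 1)
    (h50 : (1 - x) / (1 - y) ≠ 0) (h51 : (1 - x) / (1 - y) ≠ 1) :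
    wedgeK x (1 - x) - wedgeK y (1 - y) + wedgeK (y / x) (1 - y / x)
      - wedgeK ((1 - x⁻¹) / (1 - y⁻¹)) (1 - (1 - x⁻¹) / (1 - y⁻¹))
      + wedgeK ((1 - x) / (1 - y)) (1 - (1 - x) / (1 - y)) = 0 := by
  have hcx : (1 : K) - x ≠ 0 := sub_ne_zero.mpr (Ne.symm hx1)
  have hdy : (1 : K) - y ≠ 0 := sub_ne_zero.mpr (Ne.symm hy1)
  have hexy : x - y ≠ 0 := sub_ne_zero.mpr hxy
  have e3 : 1 - y / x = (x - y) / x := by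
    rw [sub_div, div_self hx0]
  have hden : (1 : K) - y⁻¹ ≠ 0 := by
    intro h
    apply hy1
    have h' : y⁻¹ = 1 := ((sub_eq_zero.mp h).symm)
    exact inv_eq_one.mp h'
  have e4a : (1 - x⁻¹) / (1 - y⁻¹) = ((1 - x) * y) / ((1 - y) * x) := by
    rw [div_eq_div_iff hden (mul_ne_zero hdy hx0)]
    field_simp
    ring
  have e4b : 1 - (1 - x⁻¹) / (1 - y⁻¹) = (x - y) / ((1 - y) * x) := by
    rw [e4a, show (x : K) - y = (1 - y) * x - (1 - x) * y by ring, sub_div,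
      div_self (mul_ne_zero hdy hx0)]
  have e5 : 1 - (1 - x) / (1 - y) = (x - y) / (1 - y) := by
    conv_rhs => rw [show (x : K) - y = (1 - y) - (1 - x) by ring, sub_div, div_self hdy]
  rw [e3, e4b, e4a, e5]
  have m3 : mA (y / x) = mA y - mA x := mA_div hy0 hx0
  have m3' : mA ((x - y) / x) = mA (x - y) - mA x := mA_div hexy hx0
  have m4 : mA (((1 - x) * y) / ((1 - y) * x)) = mA (1 - x) + mA y - (mA (1 - y) + mA x) := by
    rw [mA_div (mul_ne_zero hcx hy0) (mul_ne_zero hdy hx0),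
      mA_mul hcx hy0, mA_mul hdy hx0]
  have m4' : mA ((x - y) / ((1 - y) * x)) = mA (x - y) - (mA (1 - y) + mA x) := by
    rw [mA_div hexy (mul_ne_zero hdy hx0), mA_mul hdy hx0]
  have m5 : mA ((1 - x) / (1 - y)) = mA (1 - x) - mA (1 - y) := mA_div hcx hdy
  have m5' : mA ((x - y) / (1 - y)) = mA (x - y) - mA (1 - y) := mA_div hexy hdy
  simp only [wedgeK_eq, m3, m3', m4, m4', m5, m5', map_sub, map_add]
  exact key (ExteriorAlgebra.ι ℤ (mA x)) (ExteriorAlgebra.ι ℤ (mA y))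
    (ExteriorAlgebra.ι ℤ (mA (1 - x))) (ExteriorAlgebra.ι ℤ (mA (1 - y)))
    (ExteriorAlgebra.ι ℤ (mA (x - y)))
    (ExteriorAlgebra.ι_sq_zero _) (ExteriorAlgebra.ι_sq_zero _)
    (ExteriorAlgebra.ι_add_mul_swap _ _) (ExteriorAlgebra.ι_add_mul_swap _ _)
end

section
/- Let h₁: P¹(ℂ) → P²(ℂ) be the Veronese map [x:y] ↦ [x²:xy:y²] and, using the bilinear form ⟨,⟩ on ℂ³ associated to the quadratic form XZ − Y², let h(p) = (h₁(p), ⟨h₁(p),·⟩) ∈ Fl(ℂ). Then the tetrahedron of flags T with vertices h([0:1]), h([1:0]), h([1:1]), h([1:t]) for t ∈ ℂ∖{0,1} has edge coordinates z₁₂(T) = z₂₁(T) = z₃₄(T) = z₄₃(T) = t. -/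
/-- The Veronese map `[x:y] ↦ [x²:xy:y²]` on homogeneous coordinates. -/
def veronese (p : Fin 2 → ℂ) : Fin 3 → ℂ := ![p 0 ^ 2, p 0 * p 1, p 1 ^ 2]

/-- The linear form `⟨w, ·⟩` where `⟨,⟩` is the polarization of the quadratic form
`XZ − Y²` on `ℂ³`: `⟨w, v⟩ = (w₀v₂ + w₂v₀)/2 − w₁v₁`. -/
noncomputable def qDualForm (w : Fin 3 → ℂ) : Module.Dual ℂ (Fin 3 → ℂ) :=
  (w 2 / 2) • (LinearMap.proj 0 : (Fin 3 → ℂ) →ₗ[ℂ] ℂ)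
    + (-(w 1)) • (LinearMap.proj 1 : (Fin 3 → ℂ) →ₗ[ℂ] ℂ)
    + (w 0 / 2) • (LinearMap.proj 2 : (Fin 3 → ℂ) →ₗ[ℂ] ℂ)

/-- The tetrahedron of flags obtained via the Veronese embedding from the ideal
hyperbolic tetrahedron with vertices `[0:1], [1:0], [1:1], [1:t]` has all four edge
coordinates `z₁₂ = z₂₁ = z₃₄ = z₄₃ = t`. -/
theorem hyperbolic_tetrahedron_coords (t : ℂ) (ht0 : t ≠ 0) (ht1 : t ≠ 1) :
    let pts : Fin 4 → Fin 2 → ℂ := ![![0,1], ![1,0], ![1,1], ![1,t]]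
    let x : Fin 4 → Fin 3 → ℂ := fun i => veronese (pts i)
    let f : Fin 4 → Module.Dual ℂ (Fin 3 → ℂ) := fun i => qDualForm (veronese (pts i))
    zEdge x f 0 1 2 3 = t ∧ zEdge x f 1 0 3 2 = t ∧
    zEdge x f 2 3 0 1 = t ∧ zEdge x f 3 2 1 0 = t := by
  intro pts x f
  have h : ∀ w v : Fin 3 → ℂ, qDualForm w v = w 2 / 2 * v 0 - w 1 * v 1 + w 0 / 2 * v 2 := by
    intro w v
    simp [qDualForm]
    ring
  refine ⟨?_, ?_, ?_, ?_⟩ <;>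
  · simp only [zEdge, det3, Matrix.det_fin_three, h, x, f, pts, veronese,
      Matrix.cons_val_zero, Matrix.cons_val_one, Matrix.head_cons, Matrix.of_apply,
      Matrix.cons_val_two, Matrix.tail_cons, Matrix.cons_val_three, Matrix.head_fin_const]
    have h1 : (-1 : ℂ) + t ≠ 0 := fun h => ht1 (by linear_combination h)
    have h2 : t - t ^ 2 ≠ 0 := by
      have e : t - t ^ 2 = t * (1 - t) := by ring
      rw [e]
      exact mul_ne_zero ht0 (sub_ne_zero.2 (Ne.symm ht1))
    field_simp [h1, h2]
    try ring
    try (field_simp; ring)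
    try (field_simp [ht0, h1] <;> ring)
end

section
/- Let ([x_i],[f_i]), i=1,2,3, be three generic flags in k³ with triple ratio X = f₁(x₂)f₂(x₃)f₃(x₁)/(f₁(x₃)f₂(x₁)f₃(x₂)). In the projective coordinate system where x₁ = [1:0:0], x₂ = [0:0:1], x₃ = [1:−1:1] and ker f₁ ∩ ker f₂ = [0:1:0], the line ker f₃ has dual coordinates [X : X+1 : 1]. -/

lemma dual_expand {K : Type*} [Field K] (g : Module.Dual K (Fin 3 → K)) (v : Fin 3 → K) :
    g v = v 0 * g ![1, 0, 0] + v 1 * g ![0, 1, 0] + v 2 * g ![0, 0, 1] := by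
  have hv : v = v 0 • (![1, 0, 0] : Fin 3 → K) + v 1 • ![0, 1, 0] + v 2 • ![0, 0, 1] := by
    funext i; fin_cases i <;> simp
  conv_lhs => rw [hv]
  rw [map_add, map_add, map_smul, map_smul, map_smul, smul_eq_mul, smul_eq_mul, smul_eq_mul]

/-- For three generic flags normalized so that `x₁ = [1:0:0]`, `x₂ = [0:0:1]`,
`x₃ = [1:−1:1]` and `ker f₁ ∩ ker f₂ = [0:1:0]`, the line `ker f₃` has dual
coordinates `[X : X+1 : 1]`, where `X` is the triple ratio. -/
theorem third_line_coordinates {K : Type*} [Field K]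
    (x : Fin 3 → Fin 3 → K) (f : Fin 3 → Module.Dual K (Fin 3 → K))
    (hflag : ∀ i, f i (x i) = 0)
    (hnz : ∀ i j : Fin 3, i ≠ j → f j (x i) ≠ 0)
    (hx0 : x 0 = ![1, 0, 0]) (hx1 : x 1 = ![0, 0, 1]) (hx2 : x 2 = ![1, -1, 1])
    (hker0 : f 0 ![0, 1, 0] = 0) (hker1 : f 1 ![0, 1, 0] = 0) :
    ∃ c : K, c ≠ 0 ∧ ∀ v : Fin 3 → K,
      f 2 v = c * (zFace x f 0 1 2 * v 0 + (zFace x f 0 1 2 + 1) * v 1 + v 2) := by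
  set p := f 2 ![1, 0, 0] with hp
  set q := f 2 ![0, 1, 0] with hq
  set r := f 2 ![0, 0, 1] with hr
  have ha : f 0 ![0, 0, 1] ≠ 0 := by have := hnz 1 0 (by decide); rwa [hx1] at this
  have hb : f 1 ![1, 0, 0] ≠ 0 := by have := hnz 0 1 (by decide); rwa [hx0] at this
  have hrne : r ≠ 0 := by have := hnz 1 2 (by decide); rwa [hx1] at this
  have hf00 : f 0 ![1, 0, 0] = 0 := by have := hflag 0; rwa [hx0] at this
  have hf12 : f 1 ![0, 0, 1] = 0 := by have := hflag 1; rwa [hx1] at this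
  have hqpr : q = p + r := by
    have h2 := hflag 2
    rw [hx2, dual_expand (f 2) ![1, -1, 1]] at h2
    simp only [Matrix.cons_val_zero, Matrix.cons_val_one, Matrix.head_cons,
      Matrix.cons_val_two, Matrix.tail_cons] at h2
    rw [← hp, ← hq, ← hr] at h2
    linear_combination -h2
  have hf0x2 : f 0 (x 2) = f 0 ![0, 0, 1] := by
    rw [hx2, dual_expand (f 0) ![1, -1, 1]]
    simp [hf00, hker0]
  have hf1x2 : f 1 (x 2) = f 1 ![1, 0, 0] := by
    rw [hx2, dual_expand (f 1) ![1, -1, 1]]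
    simp [hf12, hker1]
  have hz : zFace x f 0 1 2 = p / r := by
    rw [zFace, hf0x2, hf1x2, hx0, hx1, ← hp, ← hr]
    field_simp
  refine ⟨r, hrne, fun v => ?_⟩
  rw [dual_expand (f 2) v, hz, ← hp, ← hq, ← hr, hqpr]
  field_simp
end
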